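/- For the RK-RR bias sequence defined by m_0 = x_0 - x_μ and m_{t+1} = μ(I - a_{i_t} a_{i_t}^T/||a_{i_t}||^2) m_t with i_t sampled with probability ||a_{i_t}||^2/||A||_F^2, if x_0 - x_μ ∈ range(A^T) then E||m_t||^2 ≤ [μ^2 (1 - κ_dem^{-2})]^t ||x_0 - x_μ||^2. -/

import Mathlib

open Matrix Finset
noncomputable section

/-- Squared Euclidean norm of a vector. -/
def vnormSq {k : ℕ} (x : Fin k → ℝ) : ℝ := ∑ i, x i ^ 2

/-- Squared Frobenius norm of a matrix. -/
def frobSq {n d : ℕ} (A : Matrix (Fin n) (Fin d) ℝ) : ℝ := ∑ i, vnormSq (A i)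

/-- Row sampling probability ‖a_i‖²/‖A‖_F² used by randomized Kaczmarz. -/
def rowProb {n d : ℕ} (A : Matrix (Fin n) (Fin d) ℝ) (i : Fin n) : ℝ := vnormSq (A i) / frobSq A

/-- Spectral norm (ℓ²-operator norm) of a matrix. -/
def matSpectralNorm {n d : ℕ} (M : Matrix (Fin n) (Fin d) ℝ) : ℝ :=
  ‖LinearMap.toContinuousLinearMap (Matrix.toEuclideanLin M)‖

/-- The four Penrose conditions characterizing the Moore–Penrose pseudoinverse. -/
def IsMoorePenrose {n d : ℕ} (A : Matrix (Fin n) (Fin d) ℝ) (Ap : Matrix (Fin d) (Fin n) ℝ) : Prop :=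
  A * Ap * A = A ∧ Ap * A * Ap = Ap ∧ (A * Ap)ᵀ = A * Ap ∧ (Ap * A)ᵀ = Ap * A

/-- Demmel condition number κ_dem = ‖A⁺‖ ‖A‖_F. -/
def kdem {n d : ℕ} (A : Matrix (Fin n) (Fin d) ℝ) (Ap : Matrix (Fin d) (Fin n) ℝ) : ℝ :=
  matSpectralNorm Ap * Real.sqrt (frobSq A)

/-- One randomized Kaczmarz update using row i. -/
def rkStep {n d : ℕ} (A : Matrix (Fin n) (Fin d) ℝ) (b : Fin n → ℝ) (i : Fin n) (x : Fin d → ℝ) :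
    Fin d → ℝ := x + ((b i - A i ⬝ᵥ x) / vnormSq (A i)) • A i

/-- Randomized Kaczmarz iterates along a fixed path ω of row indices. -/
def rkSeq {n d : ℕ} (A : Matrix (Fin n) (Fin d) ℝ) (b : Fin n → ℝ) (x0 : Fin d → ℝ)
    (ω : ℕ → Fin n) : ℕ → Fin d → ℝ
  | 0 => x0
  | t + 1 => rkStep A b (ω t) (rkSeq A b x0 ω t)

/-- Extend a finite path of indices to an infinite one. -/
def extendPath {n T : ℕ} [NeZero n] (ω : Fin T → Fin n) : ℕ → Fin n :=
  fun s => if h : s < T then ω ⟨s, h⟩ else 0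

/-- Probability of a finite path of i.i.d. row indices. -/
def pathWeight {n d T : ℕ} (A : Matrix (Fin n) (Fin d) ℝ) (ω : Fin T → Fin n) : ℝ :=
  ∏ t, rowProb A (ω t)

/-- The expected one-step Kaczmarz contraction matrix I - AᵀA/‖A‖_F². -/
def kacMat {n d : ℕ} (A : Matrix (Fin n) (Fin d) ℝ) : Matrix (Fin d) (Fin d) ℝ :=
  1 - (frobSq A)⁻¹ • (Aᵀ * A)

/-- x lies in the row space range(Aᵀ). -/
def inRowSpace {n d : ℕ} (A : Matrix (Fin n) (Fin d) ℝ) (x : Fin d → ℝ) : Prop :=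
  ∃ u : Fin n → ℝ, x = Aᵀ *ᵥ u

/-- RK-RR iterates: Kaczmarz step followed by weight decay by μ. -/
def rrSeq {n d : ℕ} (A : Matrix (Fin n) (Fin d) ℝ) (b : Fin n → ℝ) (μ : ℝ) (x0 : Fin d → ℝ)
    (ω : ℕ → Fin n) : ℕ → Fin d → ℝ
  | 0 => x0
  | t + 1 => μ • rkStep A b (ω t) (rrSeq A b μ x0 ω t)

/-- Orthogonal projection step (I - a aᵀ/‖a‖²) x for row a = A i. -/
def projStep {n d : ℕ} (A : Matrix (Fin n) (Fin d) ℝ) (i : Fin n) (x : Fin d → ℝ) : Fin d → ℝ :=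
  x - ((A i ⬝ᵥ x) / vnormSq (A i)) • A i

/-- RK-RR bias sequence m_{t+1} = μ (I - a aᵀ/‖a‖²) m_t. -/
def biasSeq {n d : ℕ} (A : Matrix (Fin n) (Fin d) ℝ) (μ : ℝ) (m0 : Fin d → ℝ)
    (ω : ℕ → Fin n) : ℕ → Fin d → ℝ
  | 0 => m0
  | t + 1 => μ • projStep A (ω t) (biasSeq A μ m0 ω t)

/-- RK-RR variance sequence v_{t+1} = μ(I - aaᵀ/‖a‖²)v_t + μ (b_i - aᵀx_μ)a/‖a‖² - (1-μ)x_μ. -/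
def varSeq {n d : ℕ} (A : Matrix (Fin n) (Fin d) ℝ) (b : Fin n → ℝ) (μ : ℝ) (xmu : Fin d → ℝ)
    (ω : ℕ → Fin n) : ℕ → Fin d → ℝ
  | 0 => 0
  | t + 1 => μ • projStep A (ω t) (varSeq A b μ xmu ω t)
      + (μ * ((b (ω t) - A (ω t) ⬝ᵥ xmu) / vnormSq (A (ω t)))) • A (ω t)
      - (1 - μ) • xmu

/-- Covariance matrix Σ = I_m + v 1_m 1_mᵀ. -/
def covM (m : ℕ) (v : ℝ) : Matrix (Fin m) (Fin m) ℝ := 1 + v • Matrix.of fun _ _ => 1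

/-- Block Σ_{S,T} of the covariance matrix Σ = I + v 1 1ᵀ. -/
def subBlock {m : ℕ} (v : ℝ) (S T : Finset (Fin m)) : Matrix ↥S ↥T ℝ :=
  (covM m v).submatrix (fun i => i.1) (fun j => j.1)

/-- A deterministic adaptive algorithm that accesses at most t entries of b
(given full access to A) and outputs an estimate of the least-squares solution. -/
structure RowAccessAlg (d t : ℕ) where
  query : (n : ℕ) → Matrix (Fin n) (Fin d) ℝ → (j : Fin t) → (Fin (j : ℕ) → ℝ) → Fin n
  output : (n : ℕ) → Matrix (Fin n) (Fin d) ℝ → (Fin t → ℝ) → Fin d → ℝ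

/-- The successive answers to the algorithm's adaptive queries. -/
def RowAccessAlg.answers {d t : ℕ} (alg : RowAccessAlg d t) (n : ℕ)
    (A : Matrix (Fin n) (Fin d) ℝ) (b : Fin n → ℝ) : (j : ℕ) → j < t → ℝ
  | j, h => b (alg.query n A ⟨j, h⟩ fun i => alg.answers n A b i (i.isLt.trans h))
  termination_by j _ => j

/-- The algorithm's output estimate on the problem (A, b). -/
def RowAccessAlg.run {d t : ℕ} (alg : RowAccessAlg d t) (n : ℕ)
    (A : Matrix (Fin n) (Fin d) ℝ) (b : Fin n → ℝ) : Fin d → ℝ :=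
  alg.output n A fun j => alg.answers n A b j j.isLt


section RKRRAux

lemma vnormSq_nonneg {k : ℕ} (x : Fin k → ℝ) : 0 ≤ vnormSq x :=
  Finset.sum_nonneg fun i _ => sq_nonneg _

lemma vnormSq_pos {k : ℕ} {x : Fin k → ℝ} (hx : x ≠ 0) : 0 < vnormSq x := by
  rcases (vnormSq_nonneg x).lt_or_eq with h | h
  · exact h
  · exfalso; apply hx; funext i
    have := (Finset.sum_eq_zero_iff_of_nonneg (fun i _ => sq_nonneg (x i))).mp h.symm i
      (Finset.mem_univ i)
    exact pow_eq_zero_iff (by norm_num) |>.mp this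

lemma vnormSq_smul {k : ℕ} (c : ℝ) (x : Fin k → ℝ) : vnormSq (c • x) = c ^ 2 * vnormSq x := by
  simp [vnormSq, Finset.mul_sum, mul_pow]

lemma frobSq_pos {n d : ℕ} [NeZero n] (A : Matrix (Fin n) (Fin d) ℝ) (hrows : ∀ i, A i ≠ 0) :
    0 < frobSq A :=
  Finset.sum_pos' (fun i _ => vnormSq_nonneg _)
    ⟨0, Finset.mem_univ _, vnormSq_pos (hrows 0)⟩

lemma rowProb_nonneg {n d : ℕ} (A : Matrix (Fin n) (Fin d) ℝ) (i : Fin n) : 0 ≤ rowProb A i := by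
  unfold rowProb
  have h1 := vnormSq_nonneg (A i)
  have h2 : (0:ℝ) ≤ frobSq A := Finset.sum_nonneg fun i _ => vnormSq_nonneg _
  positivity

lemma pathWeight_nonneg {n d T : ℕ} (A : Matrix (Fin n) (Fin d) ℝ) (ω : Fin T → Fin n) :
    0 ≤ pathWeight A ω :=
  Finset.prod_nonneg fun t _ => rowProb_nonneg A (ω t)

lemma vnormSq_eq_norm_sq {k : ℕ} (x : Fin k → ℝ) :
    vnormSq x = ‖(WithLp.equiv 2 (Fin k → ℝ)).symm x‖ ^ 2 := by
  rw [EuclideanSpace.norm_eq, Real.sq_sqrt (by positivity)]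
  simp [vnormSq, sq_abs]

lemma mulVec_vnormSq_le {a b : ℕ} (M : Matrix (Fin a) (Fin b) ℝ) (v : Fin b → ℝ) :
    vnormSq (M *ᵥ v) ≤ matSpectralNorm M ^ 2 * vnormSq v := by
  rw [vnormSq_eq_norm_sq, vnormSq_eq_norm_sq]
  have h := (LinearMap.toContinuousLinearMap (Matrix.toEuclideanLin M)).le_opNorm
    ((WithLp.equiv 2 (Fin b → ℝ)).symm v)
  have he : (LinearMap.toContinuousLinearMap (Matrix.toEuclideanLin M))
      ((WithLp.equiv 2 (Fin b → ℝ)).symm v) = (WithLp.equiv 2 (Fin a → ℝ)).symm (M *ᵥ v) := rfl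
  rw [he] at h
  rw [← mul_pow]
  exact pow_le_pow_left₀ (norm_nonneg _) h 2

lemma vnormSq_proj {n d : ℕ} (A : Matrix (Fin n) (Fin d) ℝ) (i : Fin n) (hi : A i ≠ 0)
    (x : Fin d → ℝ) :
    vnormSq (projStep A i x) = vnormSq x - (A i ⬝ᵥ x) ^ 2 / vnormSq (A i) := by
  have h := (vnormSq_pos hi).ne'
  have hd : A i ⬝ᵥ x = ∑ j, A i j * x j := rfl
  simp only [projStep, vnormSq] at *
  have expand : ∀ j, (x j - (A i ⬝ᵥ x) / (∑ j, A i j ^ 2) * A i j) ^ 2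
      = x j ^ 2 - 2 * ((A i ⬝ᵥ x) / (∑ j, A i j ^ 2)) * (A i j * x j)
        + ((A i ⬝ᵥ x) / (∑ j, A i j ^ 2)) ^ 2 * A i j ^ 2 := by intro j; ring
  simp only [Pi.sub_apply, Pi.smul_apply, smul_eq_mul]
  rw [Finset.sum_congr rfl (fun j _ => expand j), Finset.sum_add_distrib, Finset.sum_sub_distrib,
    ← Finset.mul_sum, ← Finset.mul_sum, ← hd]
  field_simp
  ring

lemma step_eq {n d : ℕ} (A : Matrix (Fin n) (Fin d) ℝ) (hrows : ∀ i, A i ≠ 0)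
    (hF : frobSq A ≠ 0) (x : Fin d → ℝ) :
    ∑ i, rowProb A i * vnormSq (projStep A i x)
      = vnormSq x - vnormSq (A *ᵥ x) / frobSq A := by
  have key : ∀ i, rowProb A i * vnormSq (projStep A i x)
      = vnormSq (A i) / frobSq A * vnormSq x - (A i ⬝ᵥ x) ^ 2 / frobSq A := by
    intro i
    rw [vnormSq_proj A i (hrows i) x, rowProb]
    have h := (vnormSq_pos (hrows i)).ne'
    field_simp
  rw [Finset.sum_congr rfl (fun i _ => key i), Finset.sum_sub_distrib]
  congr 1
  · have : ∀ i : Fin n, vnormSq (A i) / frobSq A * vnormSq x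
        = vnormSq (A i) * vnormSq x / frobSq A := fun i => by ring
    rw [Finset.sum_congr rfl (fun i _ => this i), ← Finset.sum_div, ← Finset.sum_mul, ← frobSq]
    field_simp
  · rw [← Finset.sum_div]
    rfl

lemma inRowSpace_row {n d : ℕ} (A : Matrix (Fin n) (Fin d) ℝ) (i : Fin n) :
    inRowSpace A (A i) := by
  refine ⟨Pi.single i 1, ?_⟩
  funext j
  simp [Matrix.mulVec, dotProduct, Pi.single_apply, Matrix.transpose_apply]

lemma inRowSpace_smul {n d : ℕ} {A : Matrix (Fin n) (Fin d) ℝ} {x : Fin d → ℝ} (c : ℝ)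
    (hx : inRowSpace A x) : inRowSpace A (c • x) := by
  obtain ⟨u, rfl⟩ := hx
  exact ⟨c • u, (Matrix.mulVec_smul _ _ _).symm⟩

lemma inRowSpace_sub {n d : ℕ} {A : Matrix (Fin n) (Fin d) ℝ} {x y : Fin d → ℝ}
    (hx : inRowSpace A x) (hy : inRowSpace A y) : inRowSpace A (x - y) := by
  obtain ⟨u, rfl⟩ := hx; obtain ⟨v, rfl⟩ := hy
  exact ⟨u - v, by rw [Matrix.mulVec_sub]⟩

lemma inRowSpace_projStep {n d : ℕ} {A : Matrix (Fin n) (Fin d) ℝ} {x : Fin d → ℝ}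
    (i : Fin n) (hx : inRowSpace A x) : inRowSpace A (projStep A i x) :=
  inRowSpace_sub hx (inRowSpace_smul _ (inRowSpace_row A i))

lemma rowspace_mulVec {n d : ℕ} {A : Matrix (Fin n) (Fin d) ℝ} {Ap : Matrix (Fin d) (Fin n) ℝ}
    (hAp : IsMoorePenrose A Ap) {x : Fin d → ℝ} (hx : inRowSpace A x) :
    Ap *ᵥ (A *ᵥ x) = x := by
  obtain ⟨u, rfl⟩ := hx
  rw [Matrix.mulVec_mulVec, Matrix.mulVec_mulVec]
  have hmat : Ap * A * Aᵀ = Aᵀ := calc Ap * A * Aᵀ = (A * (Ap * A))ᵀ := by rw [Matrix.transpose_mul, hAp.2.2.2]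
    _ = (A * Ap * A)ᵀ := by rw [Matrix.mul_assoc]
    _ = Aᵀ := by rw [hAp.1]
  rw [hmat]

lemma step_bound {n d : ℕ} [NeZero n] (A : Matrix (Fin n) (Fin d) ℝ) (hrows : ∀ i, A i ≠ 0)
    (Ap : Matrix (Fin d) (Fin n) ℝ) (hAp : IsMoorePenrose A Ap)
    (x : Fin d → ℝ) (hx : inRowSpace A x) :
    ∑ i, rowProb A i * vnormSq (projStep A i x) ≤ (1 - (kdem A Ap ^ 2)⁻¹) * vnormSq x := by
  have hF : 0 < frobSq A := frobSq_pos A hrows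
  have hk : kdem A Ap ^ 2 = matSpectralNorm Ap ^ 2 * frobSq A := by
    rw [kdem, mul_pow, Real.sq_sqrt hF.le]
  have hub : vnormSq x ≤ matSpectralNorm Ap ^ 2 * vnormSq (A *ᵥ x) := by
    have h := mulVec_vnormSq_le Ap (A *ᵥ x)
    rwa [rowspace_mulVec hAp hx] at h
  have hspos : 0 < matSpectralNorm Ap := by
    have hs0 : (0:ℝ) ≤ matSpectralNorm Ap := norm_nonneg _
    rcases hs0.lt_or_eq with h | h
    · exact h
    · exfalso
      have h2 := mulVec_vnormSq_le Ap (A *ᵥ (A 0))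
      rw [rowspace_mulVec hAp (inRowSpace_row A 0), ← h] at h2
      have := vnormSq_pos (hrows 0)
      nlinarith [vnormSq_nonneg (A *ᵥ A 0)]
  rw [step_eq A hrows hF.ne' x, hk]
  have h1 : (matSpectralNorm Ap ^ 2 * frobSq A)⁻¹ * vnormSq x ≤ vnormSq (A *ᵥ x) / frobSq A := by
    rw [inv_mul_le_iff₀ (by positivity)]
    calc vnormSq x ≤ matSpectralNorm Ap ^ 2 * vnormSq (A *ᵥ x) := hub
      _ = matSpectralNorm Ap ^ 2 * frobSq A * (vnormSq (A *ᵥ x) / frobSq A) := by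
          field_simp
  rw [sub_mul, one_mul]
  linarith

lemma contraction_nonneg {n d : ℕ} [NeZero n] (A : Matrix (Fin n) (Fin d) ℝ)
    (hrows : ∀ i, A i ≠ 0) (Ap : Matrix (Fin d) (Fin n) ℝ) (hAp : IsMoorePenrose A Ap) :
    0 ≤ 1 - (kdem A Ap ^ 2)⁻¹ := by
  have h := step_bound A hrows Ap hAp (A 0) (inRowSpace_row A 0)
  have hl : 0 ≤ ∑ i, rowProb A i * vnormSq (projStep A i (A 0)) :=
    Finset.sum_nonneg fun i _ => mul_nonneg (rowProb_nonneg A i) (vnormSq_nonneg _)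
  have hp := vnormSq_pos (hrows 0)
  nlinarith

lemma biasSeq_congr {n d : ℕ} (A : Matrix (Fin n) (Fin d) ℝ) (μ : ℝ) (m0 : Fin d → ℝ)
    (t : ℕ) (ω ω' : ℕ → Fin n) (h : ∀ s < t, ω s = ω' s) :
    biasSeq A μ m0 ω t = biasSeq A μ m0 ω' t := by
  induction t with
  | zero => rfl
  | succ t ih =>
    simp only [biasSeq]
    rw [ih (fun s hs => h s (hs.trans (Nat.lt_succ_self t))), h t (Nat.lt_succ_self t)]

lemma biasSeq_inRowSpace {n d : ℕ} {A : Matrix (Fin n) (Fin d) ℝ} (μ : ℝ) {m0 : Fin d → ℝ}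
    (h0 : inRowSpace A m0) (ω : ℕ → Fin n) (t : ℕ) : inRowSpace A (biasSeq A μ m0 ω t) := by
  induction t with
  | zero => exact h0
  | succ t ih => exact inRowSpace_smul μ (inRowSpace_projStep _ ih)

end RKRRAux

/-- the RK-RR bias sequence m_{t+1} = μ(I - a aᵀ/‖a‖²)m_t with
m_0 = x_0 - x_μ ∈ range(Aᵀ) satisfies E‖m_t‖² ≤ [μ²(1 - κ_dem⁻²)]^t ‖m_0‖². -/
theorem rkrr_bias_bound {n d : ℕ} [NeZero n]
    (A : Matrix (Fin n) (Fin d) ℝ) (hrows : ∀ i, A i ≠ 0)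
    (Ap : Matrix (Fin d) (Fin n) ℝ) (hAp : IsMoorePenrose A Ap)
    (μ : ℝ) (hμ0 : 0 < μ) (hμ1 : μ < 1)
    (m0 : Fin d → ℝ) (h0 : inRowSpace A m0) (t : ℕ) :
    ∑ ω : Fin t → Fin n, pathWeight A ω * vnormSq (biasSeq A μ m0 (extendPath ω) t)
      ≤ (μ ^ 2 * (1 - (kdem A Ap ^ 2)⁻¹)) ^ t * vnormSq m0 := by
  induction t with
  | zero => simp [pathWeight, biasSeq]
  | succ t ih =>
    set ρ : ℝ := μ ^ 2 * (1 - (kdem A Ap ^ 2)⁻¹) with hρdef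
    have hc := contraction_nonneg A hrows Ap hAp
    have hρ : 0 ≤ ρ := mul_nonneg (sq_nonneg μ) hc
    have hsnoc : ∀ (ω : Fin t → Fin n) (i : Fin n),
        biasSeq A μ m0 (extendPath (Fin.snoc ω i)) (t + 1)
          = μ • projStep A i (biasSeq A μ m0 (extendPath ω) t) := by
      intro ω i
      have h1 : extendPath (Fin.snoc ω i) t = i := by
        simp [extendPath, Fin.snoc]
      have h2 : biasSeq A μ m0 (extendPath (Fin.snoc ω i)) t
          = biasSeq A μ m0 (extendPath ω) t := by
        apply biasSeq_congr
        intro s hs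
        simp [extendPath, hs, Nat.lt_succ_of_lt hs, Fin.snoc]
      simp only [biasSeq, h1, h2]
    have hpw : ∀ (ω : Fin t → Fin n) (i : Fin n),
        pathWeight A (Fin.snoc ω i) = pathWeight A ω * rowProb A i := by
      intro ω i
      unfold pathWeight
      rw [Fin.prod_univ_castSucc]
      simp
    calc ∑ ω : Fin (t + 1) → Fin n,
          pathWeight A ω * vnormSq (biasSeq A μ m0 (extendPath ω) (t + 1))
        = ∑ p : Fin n × (Fin t → Fin n),
            pathWeight A (Fin.snoc p.2 p.1 : Fin (t + 1) → Fin n) *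
              vnormSq (biasSeq A μ m0 (extendPath (Fin.snoc p.2 p.1 : Fin (t + 1) → Fin n))
                (t + 1)) :=
          (Fintype.sum_equiv (Fin.snocEquiv (fun _ => Fin n)) _ _ (fun p => rfl)).symm
      _ = ∑ ω : Fin t → Fin n, ∑ i : Fin n, pathWeight A ω * rowProb A i *
            (μ ^ 2 * vnormSq (projStep A i (biasSeq A μ m0 (extendPath ω) t))) := by
          rw [Fintype.sum_prod_type_right]
          refine Finset.sum_congr rfl fun ω _ => Finset.sum_congr rfl fun i _ => ?_
          rw [hpw, hsnoc, vnormSq_smul]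
      _ ≤ ∑ ω : Fin t → Fin n,
            ρ * (pathWeight A ω * vnormSq (biasSeq A μ m0 (extendPath ω) t)) := by
          refine Finset.sum_le_sum fun ω _ => ?_
          have hre : ∑ i : Fin n, pathWeight A ω * rowProb A i *
              (μ ^ 2 * vnormSq (projStep A i (biasSeq A μ m0 (extendPath ω) t)))
              = pathWeight A ω * μ ^ 2 *
                ∑ i : Fin n, rowProb A i *
                  vnormSq (projStep A i (biasSeq A μ m0 (extendPath ω) t)) := by
            rw [Finset.mul_sum]
            exact Finset.sum_congr rfl fun i _ => by ring
          rw [hre]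
          have hstep := step_bound A hrows Ap hAp _ (biasSeq_inRowSpace μ h0 (extendPath ω) t)
          calc pathWeight A ω * μ ^ 2 *
                ∑ i : Fin n, rowProb A i *
                  vnormSq (projStep A i (biasSeq A μ m0 (extendPath ω) t))
              ≤ pathWeight A ω * μ ^ 2 *
                ((1 - (kdem A Ap ^ 2)⁻¹) * vnormSq (biasSeq A μ m0 (extendPath ω) t)) := by
                apply mul_le_mul_of_nonneg_left hstep
                exact mul_nonneg (pathWeight_nonneg A ω) (sq_nonneg μ)
            _ = ρ * (pathWeight A ω * vnormSq (biasSeq A μ m0 (extendPath ω) t)) := by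
                rw [hρdef]; ring
      _ = ρ * ∑ ω : Fin t → Fin n,
            pathWeight A ω * vnormSq (biasSeq A μ m0 (extendPath ω) t) := by
          rw [Finset.mul_sum]
      _ ≤ ρ * (ρ ^ t * vnormSq m0) := mul_le_mul_of_nonneg_left ih hρ
      _ = ρ ^ (t + 1) * vnormSq m0 := by ring
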